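/- If t is a nonnegative integer divisible by 3, then the number of 3×3 matrices with nonnegative integer entries such that every row sum, every column sum, and both main diagonal sums equal t is (2/9)t² + (2/3)t + 1. -/
import Mathlib

open Finset

def mmk (c a b : ℕ) : Matrix (Fin 3) (Fin 3) ℕ :=
  !![a, b, 3*c - a - b;
     4*c - 2*a - b, c, 2*a + b - 2*c;
     a + b - c, 2*c - b, 2*c - a]

def mU (c : ℕ) : Finset (ℕ × ℕ) :=
  (Finset.range (2*c+1)).biUnion
    (fun a => (Finset.Icc (2*c - 2*a) (min (2*c) (4*c - 2*a))).image (fun b => (a, b)))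

lemma mem_mU (c : ℕ) (p : ℕ × ℕ) :
    p ∈ mU c ↔ p.1 ≤ 2*c ∧ p.2 ≤ 2*c ∧ 2*c ≤ 2*p.1 + p.2 ∧ 2*p.1 + p.2 ≤ 4*c := by
  obtain ⟨a, b⟩ := p
  simp only [mU, Finset.mem_biUnion, Finset.mem_image, Finset.mem_Icc, Finset.mem_range,
    Prod.mk.injEq]
  constructor
  · rintro ⟨a', ha', b', ⟨h1, h2⟩, rfl, rfl⟩
    omega
  · rintro ⟨h1, h2, h3, h4⟩
    exact ⟨a, by omega, b, ⟨by omega, by omega⟩, rfl, rfl⟩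

lemma sum_odd (n : ℕ) : ∑ a ∈ Finset.range n, (2*a+1) = n^2 := by
  induction n with
  | zero => simp
  | succ n ih => rw [Finset.sum_range_succ, ih]; ring

lemma card_mU (c : ℕ) : (mU c).card = (c+1)^2 + c^2 := by
  rw [mU, Finset.card_biUnion]
  · have hterm : ∀ a ∈ Finset.range (2*c+1),
        ((Finset.Icc (2*c - 2*a) (min (2*c) (4*c - 2*a))).image (fun b => (a, b))).card
          = min (2*c) (4*c - 2*a) + 1 - (2*c - 2*a) := by
      intro a _
      rw [Finset.card_image_of_injective _ (by intro x y hxy; simpa using hxy),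
        Nat.card_Icc]
    rw [Finset.sum_congr rfl hterm]
    have hsplit : 2*c+1 = (c+1) + c := by omega
    rw [hsplit, Finset.sum_range_add]
    have h1 : ∑ a ∈ Finset.range (c+1), (min (2*c) (4*c - 2*a) + 1 - (2*c - 2*a))
        = ∑ a ∈ Finset.range (c+1), (2*a+1) := by
      apply Finset.sum_congr rfl
      intro a ha
      simp only [Finset.mem_range] at ha
      omega
    have h2 : ∑ i ∈ Finset.range c, (min (2*c) (4*c - 2*(c+1+i)) + 1 - (2*c - 2*(c+1+i)))
        = ∑ i ∈ Finset.range c, (2*(c-1-i)+1) := by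
      apply Finset.sum_congr rfl
      intro i hi
      simp only [Finset.mem_range] at hi
      omega
    have h3 : ∑ i ∈ Finset.range c, (2*(c-1-i)+1) = ∑ j ∈ Finset.range c, (2*j+1) := by
      rw [← Finset.sum_range_reflect]
      apply Finset.sum_congr rfl
      intro j hj
      simp only [Finset.mem_range] at hj
      omega
    rw [h1, h2, h3, sum_odd, sum_odd]
  · intro x _ y _ hxy
    simp only [Finset.disjoint_left, Finset.mem_image, Finset.mem_Icc]
    rintro p ⟨b, _, rfl⟩ ⟨b', _, h⟩
    injection h with h1 h2
    exact hxy h1.symm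

lemma magic_set_eq (c : ℕ) :
    {M : Matrix (Fin 3) (Fin 3) ℕ |
      (∀ i, ∑ j, M i j = 3*c) ∧ (∀ j, ∑ i, M i j = 3*c) ∧
      M 0 0 + M 1 1 + M 2 2 = 3*c ∧ M 0 2 + M 1 1 + M 2 0 = 3*c}
    = ↑((mU c).image (fun p => mmk c p.1 p.2)) := by
  ext M
  simp only [Set.mem_setOf_eq, Finset.coe_image, Set.mem_image, Finset.mem_coe]
  constructor
  · rintro ⟨hr, hcol, hd1, hd2⟩
    have r0 := hr 0; have r1 := hr 1; have r2 := hr 2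
    have c0 := hcol 0; have c1 := hcol 1; have c2 := hcol 2
    simp only [Fin.sum_univ_three] at r0 r1 r2 c0 c1 c2
    refine ⟨(M 0 0, M 0 1), ?_, ?_⟩
    · rw [mem_mU]; dsimp only; omega
    · dsimp only
      have h02 : 3*c - M 0 0 - M 0 1 = M 0 2 := by omega
      have h10 : 4*c - 2*M 0 0 - M 0 1 = M 1 0 := by omega
      have h11 : c = M 1 1 := by omega
      have h12 : 2*M 0 0 + M 0 1 - 2*c = M 1 2 := by omega
      have h20 : M 0 0 + M 0 1 - c = M 2 0 := by omega
      have h21 : 2*c - M 0 1 = M 2 1 := by omega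
      have h22 : 2*c - M 0 0 = M 2 2 := by omega
      conv_rhs => rw [Matrix.eta_fin_three M]
      simp only [mmk]
      rw [h02, h10, h12, h20, h21, h22]
      rw [h11]
  · rintro ⟨⟨a, b⟩, hp, rfl⟩
    rw [mem_mU] at hp
    dsimp only at hp ⊢
    obtain ⟨h1, h2, h3, h4⟩ := hp
    refine ⟨?_, ?_, ?_, ?_⟩
    · intro i; fin_cases i <;>
        simp [mmk, Fin.sum_univ_three] <;> omega
    · intro j; fin_cases j <;>
        simp [mmk, Fin.sum_univ_three] <;> omega
    · simp [mmk]; omega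
    · simp [mmk]; omega

theorem macmahon_magic_3x3 (t : ℕ) (h : 3 ∣ t) :
    (Set.ncard {M : Matrix (Fin 3) (Fin 3) ℕ |
      (∀ i, ∑ j, M i j = t) ∧ (∀ j, ∑ i, M i j = t) ∧
      M 0 0 + M 1 1 + M 2 2 = t ∧ M 0 2 + M 1 1 + M 2 0 = t} : ℚ) =
    (2 / 9) * (t : ℚ) ^ 2 + (2 / 3) * (t : ℚ) + 1 := by
  obtain ⟨c, rfl⟩ := h
  rw [magic_set_eq c, Set.ncard_coe_finset]
  have hinj : Set.InjOn (fun p : ℕ × ℕ => mmk c p.1 p.2) ↑(mU c) := by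
    rintro ⟨a, b⟩ _ ⟨a', b'⟩ _ hEq
    have h00 := congrFun (congrFun hEq 0) 0
    have h01 := congrFun (congrFun hEq 0) 1
    simp only [mmk, Matrix.cons_val_zero, Matrix.cons_val_one, Matrix.head_cons,
      Matrix.of_apply, Matrix.cons_val'] at h00 h01
    exact Prod.ext h00 h01
  rw [Finset.card_image_of_injOn hinj, card_mU]
  push_cast
  ring
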